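/- Closing a path does not change its signed area: let Γ = (γ₁, γ₂) : [0,1] → ℝ² be a Lipschitz path, and let Γ̃ = Γ * L be the concatenation of Γ with the linear path L(t) = Γ(1) + t·(Γ(0) − Γ(1)) from Γ(1) to Γ(0). Then A(Γ̃) = A(Γ), where for a Lipschitz path Λ = (λ₁, λ₂) the signed area is A(Λ) = (1/2) ∫₀¹ [ (λ₁(t) − λ₁(0)) λ₂'(t) − (λ₂(t) − λ₂(0)) λ₁'(t) ] dt. -/

import Mathlib

noncomputable section

/-- Concatenation of paths: `(Γ₁*Γ₂)(t) = Γ₁(2t)` for `t ∈ [0,1/2)` and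
`(Γ₁*Γ₂)(t) = Γ₁(1) − Γ₂(0) + Γ₂(2t−1)` for `t ∈ [1/2,1]`. -/
def concat (Γ₁ Γ₂ : ℝ → EuclideanSpace ℝ (Fin 2)) : ℝ → EuclideanSpace ℝ (Fin 2) :=
  fun t => if t < 1/2 then Γ₁ (2 * t) else Γ₁ 1 - Γ₂ 0 + Γ₂ (2 * t - 1)

/-- The signed area of a path `Λ = (λ₁, λ₂) : [0,1] → ℝ²`:
`A(Λ) = (1/2) ∫₀¹ [ (λ₁(t) − λ₁(0)) λ₂'(t) − (λ₂(t) − λ₂(0)) λ₁'(t) ] dt`. -/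
def signedArea (Λ : ℝ → EuclideanSpace ℝ (Fin 2)) : ℝ :=
  (1/2) * ∫ t in (0:ℝ)..1,
    ((Λ t 0 - Λ 0 0) * deriv (fun s => Λ s 1) t -
     (Λ t 1 - Λ 0 1) * deriv (fun s => Λ s 0) t)

open MeasureTheory Set intervalIntegral Filter

lemma dist_coord_le (x y : EuclideanSpace ℝ (Fin 2)) (i : Fin 2) :
    dist (x i) (y i) ≤ dist x y := by
  rw [EuclideanSpace.dist_eq]
  have h : dist (x i) (y i) = Real.sqrt (dist (x i) (y i) ^ 2) :=
    (Real.sqrt_sq dist_nonneg).symm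
  rw [h]
  apply Real.sqrt_le_sqrt
  exact Finset.single_le_sum (f := fun j => dist (x j) (y j) ^ 2)
    (fun j _ => sq_nonneg _) (Finset.mem_univ i)

lemma deriv_comp_two_mul (f : ℝ → ℝ) (t : ℝ) :
    deriv (fun s => f (2 * s)) t = 2 * deriv f (2 * t) := by
  by_cases hf : DifferentiableAt ℝ f (2 * t)
  · have h1 : HasDerivAt (fun s : ℝ => 2 * s) 2 t := by
      simpa using (hasDerivAt_id t).const_mul (2:ℝ)
    have h2 : HasDerivAt (fun s => f (2 * s)) (deriv f (2 * t) * 2) t :=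
      HasDerivAt.comp t hf.hasDerivAt h1
    rw [h2.deriv]; ring
  · have hg : ¬ DifferentiableAt ℝ (fun s => f (2 * s)) t := by
      intro h
      apply hf
      have h2 : DifferentiableAt ℝ (fun u : ℝ => u / 2) (2 * t) := by fun_prop
      have h3 : DifferentiableAt ℝ ((fun s => f (2 * s)) ∘ fun u : ℝ => u / 2) (2 * t) := by
        apply DifferentiableAt.comp
        · simpa using h
        · exact h2
      have h4 : ((fun s => f (2 * s)) ∘ fun u : ℝ => u / 2) = f := by
        funext u; simp [Function.comp]; ring_nf
      rwa [h4] at h3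
    rw [deriv_zero_of_not_differentiableAt hf, deriv_zero_of_not_differentiableAt hg]
    ring

/-- Closing a path does not change its signed area: if `Γ : [0,1] → ℝ²` is a
Lipschitz path and `Γ̃ = Γ * L` is the concatenation of `Γ` with the linear path
`L(t) = Γ(1) + t·(Γ(0) − Γ(1))` from `Γ(1)` to `Γ(0)`, then `A(Γ̃) = A(Γ)`. -/
theorem signedArea_close_path (Γ : ℝ → EuclideanSpace ℝ (Fin 2))
    (hΓ : ∃ K : NNReal, LipschitzOnWith K Γ (Set.Icc 0 1)) :
    signedArea (concat Γ (fun t => Γ 1 + t • (Γ 0 - Γ 1))) = signedArea Γ := by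
  obtain ⟨K, hK⟩ := hΓ
  set G : ℝ → EuclideanSpace ℝ (Fin 2) :=
    concat Γ (fun t => Γ 1 + t • (Γ 0 - Γ 1)) with hG
  set F : ℝ → ℝ := fun t =>
    (Γ t 0 - Γ 0 0) * deriv (fun s => Γ s 1) t -
    (Γ t 1 - Γ 0 1) * deriv (fun s => Γ s 0) t with hF
  set Ft : ℝ → ℝ := fun t =>
    (G t 0 - G 0 0) * deriv (fun s => G s 1) t -
    (G t 1 - G 0 1) * deriv (fun s => G s 0) t with hFt
  have hG0 : G 0 = Γ 0 := by norm_num [hG, concat]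
  -- coordinates are Lipschitz
  have hKi : ∀ i : Fin 2, LipschitzOnWith K (fun s => Γ s i) (Icc 0 1) := by
    intro i
    rw [lipschitzOnWith_iff_dist_le_mul]
    intro x hx y hy
    exact le_trans (dist_coord_le (Γ x) (Γ y) i) (hK.dist_le_mul x hx y hy)
  -- derivative bound on the interior
  have hderiv_le : ∀ i : Fin 2, ∀ t ∈ Ioo (0:ℝ) 1, ‖deriv (fun s => Γ s i) t‖ ≤ K := by
    intro i t ht
    have hmem : Icc (0:ℝ) 1 ∈ nhds t := Icc_mem_nhds ht.1 ht.2
    have hfd : ‖fderiv ℝ (fun s => Γ s i) t‖ ≤ K :=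
      norm_fderiv_le_of_lipschitzOn ℝ hmem (hKi i)
    rw [← fderiv_apply_one_eq_deriv]
    calc ‖(fderiv ℝ (fun s => Γ s i) t) 1‖
        ≤ ‖fderiv ℝ (fun s => Γ s i) t‖ * ‖(1:ℝ)‖ := ContinuousLinearMap.le_opNorm _ _
      _ ≤ K := by simpa using hfd
  -- value bound
  have hval_le : ∀ i : Fin 2, ∀ t ∈ Icc (0:ℝ) 1, ‖Γ t i - Γ 0 i‖ ≤ K := by
    intro i t ht
    have h := (hKi i).dist_le_mul t ht 0 (left_mem_Icc.2 one_pos.le)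
    rw [Real.dist_eq] at h
    calc ‖Γ t i - Γ 0 i‖ = |Γ t i - Γ 0 i| := rfl
      _ ≤ K * |t - 0| := h
      _ ≤ K * 1 := by
          apply mul_le_mul_of_nonneg_left _ K.coe_nonneg
          rw [sub_zero, abs_le]; exact ⟨by linarith [ht.1], ht.2⟩
      _ = K := mul_one _
  -- bound on F
  have hFbound : ∀ t ∈ Ioo (0:ℝ) 1, ‖F t‖ ≤ (K:ℝ) * K + K * K := by
    intro t ht
    have h1 := hval_le 0 t (Ioo_subset_Icc_self ht)
    have h2 := hval_le 1 t (Ioo_subset_Icc_self ht)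
    have h3 := hderiv_le 0 t ht
    have h4 := hderiv_le 1 t ht
    calc ‖F t‖ ≤ ‖(Γ t 0 - Γ 0 0) * deriv (fun s => Γ s 1) t‖ +
        ‖(Γ t 1 - Γ 0 1) * deriv (fun s => Γ s 0) t‖ := norm_sub_le _ _
      _ ≤ (K:ℝ) * K + K * K := by
          rw [norm_mul, norm_mul]
          exact add_le_add (mul_le_mul h1 h4 (norm_nonneg _) K.coe_nonneg)
            (mul_le_mul h2 h3 (norm_nonneg _) K.coe_nonneg)
  -- measurability of F on (0,1]
  have hmeasΓ : ∀ i : Fin 2,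
      AEStronglyMeasurable (fun s => Γ s i) (volume.restrict (Ioc (0:ℝ) 1)) := by
    intro i
    exact (((hKi i).continuousOn.mono Ioc_subset_Icc_self).aestronglyMeasurable
      measurableSet_Ioc)
  have hmeasF : AEStronglyMeasurable F (volume.restrict (Ioc (0:ℝ) 1)) := by
    have h2 : ∀ i : Fin 2, AEStronglyMeasurable (deriv (fun s => Γ s i))
        (volume.restrict (Ioc (0:ℝ) 1)) :=
      fun i => ((measurable_deriv _).aestronglyMeasurable).restrict
    exact (((hmeasΓ 0).sub aestronglyMeasurable_const).mul (h2 1)).sub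
      (((hmeasΓ 1).sub aestronglyMeasurable_const).mul (h2 0))
  -- a.e. avoidance of single points
  have hne1 : ∀ᵐ t : ℝ ∂volume, t ≠ (1:ℝ) := by
    have h : (volume : Measure ℝ) {(1:ℝ)} = 0 := Real.volume_singleton
    rw [ae_iff]; simpa [not_not, Set.setOf_eq_eq_singleton] using h
  have hne2 : ∀ᵐ t : ℝ ∂volume, t ≠ (1/2:ℝ) := by
    have h : (volume : Measure ℝ) {(1/2:ℝ)} = 0 := Real.volume_singleton
    rw [ae_iff]; simpa [not_not, Set.setOf_eq_eq_singleton] using h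
  -- F is interval integrable
  have hFint : IntervalIntegrable F volume 0 1 := by
    rw [intervalIntegrable_iff_integrableOn_Ioc_of_le (by norm_num : (0:ℝ) ≤ 1)]
    refine ⟨hmeasF, ?_⟩
    apply HasFiniteIntegral.restrict_of_bounded (C := (K:ℝ) * K + K * K)
      (by simp : volume (Ioc (0:ℝ) 1) < ⊤)
    filter_upwards [ae_restrict_mem measurableSet_Ioc, ae_restrict_of_ae hne1] with t ht hne
    exact hFbound t ⟨ht.1, lt_of_le_of_ne ht.2 hne⟩
  -- on the first half, Ft t = 2 * F (2t)
  have hmid : ∀ t ∈ Ioo (0:ℝ) (1/2), Ft t = 2 * F (2 * t) := by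
    intro t ht
    have hev : ∀ᶠ s in nhds t, G s = Γ (2 * s) := by
      filter_upwards [Iio_mem_nhds ht.2] with s hs
      rw [mem_Iio] at hs
      simp only [hG, concat]
      rw [if_pos hs]
    have hd : ∀ i : Fin 2, deriv (fun s => G s i) t = 2 * deriv (fun s => Γ s i) (2 * t) := by
      intro i
      have h1 : (fun s => G s i) =ᶠ[nhds t] (fun s => Γ (2 * s) i) := by
        filter_upwards [hev] with s hs; rw [hs]
      rw [h1.deriv_eq]
      exact deriv_comp_two_mul (fun s => Γ s i) t
    have hGt : G t = Γ (2 * t) := by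
      simp only [hG, concat]
      rw [if_pos ht.2]
    rw [hFt, hF]
    simp only [hGt, hG0, hd 0, hd 1]
    ring
  -- on the second half, Ft t = 0
  have hright : ∀ t ∈ Ioc (1/2:ℝ) 1, Ft t = 0 := by
    intro t ht
    have hev : ∀ᶠ s in nhds t, G s = Γ 1 + (2 * s - 1) • (Γ 0 - Γ 1) := by
      filter_upwards [Ioi_mem_nhds ht.1] with s hs
      have h : ¬ s < 1/2 := not_lt.2 hs.le
      simp only [hG, concat, h, if_false, zero_smul, add_zero]
      abel
    have hd : ∀ i : Fin 2, deriv (fun s => G s i) t = 2 * (Γ 0 i - Γ 1 i) := by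
      intro i
      have h1 : (fun s => G s i) =ᶠ[nhds t]
          (fun s => Γ 1 i + (2 * s - 1) * (Γ 0 i - Γ 1 i)) := by
        filter_upwards [hev] with s hs
        rw [hs]
        simp [PiLp.add_apply, PiLp.smul_apply, PiLp.sub_apply, smul_eq_mul]
      rw [h1.deriv_eq]
      have h2 : HasDerivAt (fun s : ℝ => 2 * s - 1) 2 t := by
        simpa using ((hasDerivAt_id t).const_mul (2:ℝ)).sub_const 1
      have h3 : HasDerivAt (fun s : ℝ => Γ 1 i + (2 * s - 1) * (Γ 0 i - Γ 1 i))
          (2 * (Γ 0 i - Γ 1 i)) t := by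
        simpa using (h2.mul_const (Γ 0 i - Γ 1 i)).const_add (Γ 1 i)
      exact h3.deriv
    have hGt : G t = Γ 1 + (2 * t - 1) • (Γ 0 - Γ 1) := by
      have h : ¬ t < 1/2 := not_lt.2 ht.1.le
      simp only [hG, concat, h, if_false, zero_smul, add_zero]
      abel
    have hGti : ∀ i : Fin 2, G t i = Γ 1 i + (2 * t - 1) * (Γ 0 i - Γ 1 i) := by
      intro i
      rw [hGt]
      simp [PiLp.add_apply, PiLp.smul_apply, PiLp.sub_apply, smul_eq_mul]
    rw [hFt]
    simp only [hGti 0, hGti 1, hG0, hd 0, hd 1]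
    ring
  -- integrability of Ft on each half
  have hFt_int2 : IntervalIntegrable Ft volume (1/2) 1 := by
    rw [intervalIntegrable_iff_integrableOn_Ioc_of_le (by norm_num : (1/2:ℝ) ≤ 1)]
    exact (integrableOn_congr_fun (fun t ht => hright t ht) measurableSet_Ioc).2
      (integrableOn_zero)
  have h2F_int : IntervalIntegrable (fun t => 2 * F (2 * t)) volume 0 (1/2) := by
    have h := (hFint.comp_mul_left (c := 2)).const_mul 2
    norm_num at h
    convert h using 2
  have hFt_int1 : IntervalIntegrable Ft volume 0 (1/2) := by
    rw [intervalIntegrable_iff_integrableOn_Ioc_of_le (by norm_num : (0:ℝ) ≤ 1/2)] at h2F_int ⊢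
    apply h2F_int.congr
    filter_upwards [ae_restrict_mem measurableSet_Ioc, ae_restrict_of_ae hne2] with t ht hne
    exact (hmid t ⟨ht.1, lt_of_le_of_ne ht.2 hne⟩).symm
  -- put things together
  have hsplit : (∫ t in (0:ℝ)..1, Ft t) =
      (∫ t in (0:ℝ)..(1/2), Ft t) + ∫ t in (1/2:ℝ)..1, Ft t :=
    (integral_add_adjacent_intervals hFt_int1 hFt_int2).symm
  have hz : (∫ t in (1/2:ℝ)..1, Ft t) = 0 := by
    have h0 : (∫ t in (1/2:ℝ)..1, Ft t) = ∫ t in (1/2:ℝ)..1, (0:ℝ) := by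
      apply intervalIntegral.integral_congr_ae
      apply ae_of_all
      intro t ht
      rw [uIoc_of_le (by norm_num : (1/2:ℝ) ≤ 1)] at ht
      exact hright t ht
    rw [h0, intervalIntegral.integral_zero]
  have h1 : (∫ t in (0:ℝ)..(1/2), Ft t) = ∫ t in (0:ℝ)..(1/2), 2 * F (2 * t) := by
    apply intervalIntegral.integral_congr_ae
    filter_upwards [hne2] with t hnet htm
    rw [uIoc_of_le (by norm_num : (0:ℝ) ≤ 1/2)] at htm
    exact hmid t ⟨htm.1, lt_of_le_of_ne htm.2 hnet⟩
  have h2 : (∫ t in (0:ℝ)..(1/2), 2 * F (2 * t)) = ∫ t in (0:ℝ)..1, F t := by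
    rw [intervalIntegral.integral_const_mul,
      intervalIntegral.integral_comp_mul_left (fun t => F t) (two_ne_zero)]
    norm_num [smul_eq_mul]
    ring
  have hkey : (∫ t in (0:ℝ)..1, Ft t) = ∫ t in (0:ℝ)..1, F t := by
    rw [hsplit, hz, h1, h2, add_zero]
  have hsa : signedArea G = (1/2) * ∫ t in (0:ℝ)..1, Ft t := by rw [hFt]; rfl
  have hsaΓ : signedArea Γ = (1/2) * ∫ t in (0:ℝ)..1, F t := by rw [hF]; rfl
  rw [hsa, hsaΓ, hkey]
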